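/- Let R be a commutative ring, V the free R-module on {v₊, v₋}, W the free R-module on {w₊, w₋}, and let Δ, σ, δ be the band surgery maps defined in the context. Then (δ ⊗ id_W) ∘ σ = (id_V ⊗ σ) ∘ Δ as R-linear maps V → V ⊗ W ⊗ W. -/

import Mathlib

open TensorProduct

/-- With `V` free on `{v₊, v₋}`, `W` free on `{w₊, w₋}`, and band
surgery maps `Δ, σ, δ` as in the context, one has
`(δ ⊗ id_W) ∘ σ = (id_V ⊗ σ) ∘ Δ` as linear maps `V → V ⊗ W ⊗ W`. -/
theorem split_into_noncontractible_then_split_off_contractible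
    {R V W : Type*} [CommRing R] [AddCommGroup V] [Module R V]
    [AddCommGroup W] [Module R W]
    (b : Module.Basis Bool R V) (vp vm : V) (hvp : vp = b true) (hvm : vm = b false)
    (c : Module.Basis Bool R W) (wp wm : W) (hwp : wp = c true) (hwm : wm = c false)
    (Δ : V →ₗ[R] V ⊗[R] V)
    (hΔ₁ : Δ vp = vp ⊗ₜ vm + vm ⊗ₜ vp) (hΔ₂ : Δ vm = vm ⊗ₜ vm)
    (σ : V →ₗ[R] W ⊗[R] W)
    (hσ₁ : σ vp = wp ⊗ₜ wm + wm ⊗ₜ wp) (hσ₂ : σ vm = 0)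
    (δ : W →ₗ[R] V ⊗[R] W)
    (hδ₁ : δ wp = vm ⊗ₜ wp) (hδ₂ : δ wm = vm ⊗ₜ wm) :
    (TensorProduct.map δ (LinearMap.id : W →ₗ[R] W)).comp σ =
      ((TensorProduct.assoc R V W W).symm.toLinearMap).comp
        ((TensorProduct.map (LinearMap.id : V →ₗ[R] V) σ).comp Δ) := by
  apply b.ext
  intro i
  cases i <;>
    simp [← hvp, ← hvm, hΔ₁, hΔ₂, hσ₁, hσ₂, hδ₁, hδ₂, TensorProduct.tmul_add,
      TensorProduct.add_tmul]
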